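/- Let dμ(x;t) be a t-dependent symmetric matrix measure with ∂_t dμ(x;t) = x dμ(x;t), and let {P_n(x;t)} be the associated monic matrix orthogonal polynomials with normalizations H_n(t). Then ∂_t P_n(x;t) = -b_n P_{n-1}(x;t) where b_n = H_n H_{n-1}^{-1}. -/

import Mathlib

open Polynomial Finset Matrix

/-- The pairing `⟨f, x^k⟩ = ∫ f(x) dμ(x) x^k = Σ_i f_i m_{i+k}` of a matrix polynomial
with the monomial `x^k`, in terms of the moments `m` of the measure. -/
noncomputable def momPair {p : ℕ} (m : ℕ → Matrix (Fin p) (Fin p) ℝ)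
    (f : Polynomial (Matrix (Fin p) (Fin p) ℝ)) (k : ℕ) : Matrix (Fin p) (Fin p) ℝ :=
  ∑ i ∈ range (f.natDegree + 1), f.coeff i * m (i + k)

lemma momPair_eq_of_lt {p : ℕ} (m : ℕ → Matrix (Fin p) (Fin p) ℝ)
    (f : Polynomial (Matrix (Fin p) (Fin p) ℝ)) (k N : ℕ) (h : f.natDegree < N) :
    momPair m f k = ∑ i ∈ range N, f.coeff i * m (i + k) := by
  unfold momPair
  refine Finset.sum_subset (by intro x hx; simp only [mem_range] at *; omega) ?_
  intro x hx hx'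
  simp only [mem_range, not_lt] at hx'
  rw [Polynomial.coeff_eq_zero_of_natDegree_lt (by omega), zero_mul]

lemma zero_of_pair {p : ℕ} (m : ℕ → Matrix (Fin p) (Fin p) ℝ)
    (P : ℕ → Polynomial (Matrix (Fin p) (Fin p) ℝ))
    (hmonic : ∀ n, (P n).Monic ∧ (P n).natDegree = n)
    (horth : ∀ n, ∀ k < n, momPair m (P n) k = 0)
    (hH : ∀ n, IsUnit (momPair m (P n) n)) :
    ∀ N (c : ℕ → Matrix (Fin p) (Fin p) ℝ),
      (∀ k < N, ∑ i ∈ range N, c i * m (i + k) = 0) → ∀ k < N, c k = 0 := by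
  intro N
  induction N with
  | zero => intro c h k hk; omega
  | succ N ih =>
    intro c h
    have hPcoeff : (P N).coeff N = 1 := by
      have h1 := (hmonic N).1.coeff_natDegree
      rwa [(hmonic N).2] at h1
    have hmomN : ∀ k, momPair m (P N) k = ∑ i ∈ range (N + 1), (P N).coeff i * m (i + k) :=
      fun k => momPair_eq_of_lt m (P N) k (N + 1) (by rw [(hmonic N).2]; omega)
    set b0 := c N with hb0def
    set c' : ℕ → Matrix (Fin p) (Fin p) ℝ := fun i => c i - b0 * (P N).coeff i with hc'
    have hc'N : c' N = 0 := by simp [hc', hPcoeff, hb0def]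
    have hsum : ∀ k < N, ∑ i ∈ range N, c' i * m (i + k) = 0 := by
      intro k hk
      have e1 : ∑ i ∈ range (N + 1), c' i * m (i + k)
          = (∑ i ∈ range (N + 1), c i * m (i + k))
            - b0 * ∑ i ∈ range (N + 1), (P N).coeff i * m (i + k) := by
        rw [Finset.mul_sum, ← Finset.sum_sub_distrib]
        refine Finset.sum_congr rfl fun i _ => ?_
        rw [hc', sub_mul, mul_assoc]
      rw [h k (by omega), ← hmomN, horth N k hk, mul_zero, sub_zero] at e1
      rw [Finset.sum_range_succ, hc'N, zero_mul, add_zero] at e1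
      exact e1
    have hc'z := ih c' hsum
    have hrep : ∀ k < N + 1, c k = b0 * (P N).coeff k := by
      intro k hk
      rcases Nat.lt_succ_iff_lt_or_eq.mp hk with hk | hk
      · have := hc'z k hk
        rw [hc'] at this
        simpa [sub_eq_zero] using this
      · subst hk; rw [hPcoeff, mul_one]
    have hb0 : b0 * momPair m (P N) N = 0 := by
      have h2 := h N (Nat.lt_succ_self N)
      rw [hmomN N, Finset.mul_sum]
      rw [← h2]
      refine Finset.sum_congr rfl fun i hi => ?_
      rw [hrep i (mem_range.mp hi), mul_assoc]
    have hb00 : b0 = 0 := by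
      have hu := hH N
      have : b0 = b0 * momPair m (P N) N * Ring.inverse (momPair m (P N) N) := by
        rw [mul_assoc, Ring.mul_inverse_cancel _ hu, mul_one]
      rw [this, hb0, zero_mul]
    intro k hk
    rw [hrep k hk, hb00, zero_mul]

/-- Time evolution of monic matrix orthogonal polynomials for a symmetric measure with
`∂_t dμ = x dμ` (i.e. `∂_t m_k = m_{k+1}` for the moments): `∂_t P_n = -b_n P_{n-1}`,
where `b_n = H_n H_{n-1}⁻¹` and `H_n(t) = ∫ P_n(x;t) dμ(x;t) x^n` is invertible. -/
theorem stmt5 {p : ℕ} (m : ℝ → ℕ → Matrix (Fin p) (Fin p) ℝ)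
    (hsym : ∀ t k, (m t k)ᵀ = m t k)
    (hmom : ∀ k t i j, HasDerivAt (fun s => m s k i j) (m t (k + 1) i j) t)
    (P : ℝ → ℕ → Polynomial (Matrix (Fin p) (Fin p) ℝ))
    (hmonic : ∀ t n, (P t n).Monic ∧ (P t n).natDegree = n)
    (horth : ∀ t n, ∀ k < n, momPair (m t) (P t n) k = 0)
    (hH : ∀ t n, IsUnit (momPair (m t) (P t n) n))
    (hdiff : ∀ n k i j t, DifferentiableAt ℝ (fun s => (P s n).coeff k i j) t) :
    ∀ n : ℕ, 1 ≤ n → ∀ t k i j,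
      deriv (fun s => (P s n).coeff k i j) t =
        ((-(momPair (m t) (P t n) n *
            Ring.inverse (momPair (m t) (P t (n - 1)) (n - 1)))) *
          (P t (n - 1)).coeff k) i j := by
  intro n hn t
  have hdeg : ∀ s N, (P s N).natDegree = N := fun s N => (hmonic s N).2
  have hc1 : ∀ s, (P s n).coeff n = 1 := fun s => by
    have h1 := (hmonic s n).1.coeff_natDegree
    rwa [hdeg s n] at h1
  set b : Matrix (Fin p) (Fin p) ℝ :=
    momPair (m t) (P t n) n * Ring.inverse (momPair (m t) (P t (n - 1)) (n - 1)) with hb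
  set dcM : ℕ → Matrix (Fin p) (Fin p) ℝ :=
    fun l => Matrix.of fun i j => deriv (fun s => (P s n).coeff l i j) t with hdcM
  have hdcMn : dcM n = 0 := by
    ext i j
    have he : (fun s => (P s n).coeff n i j) = fun _ => (1 : Matrix (Fin p) (Fin p) ℝ) i j :=
      funext fun s => by rw [hc1 s]
    show deriv (fun s => (P s n).coeff n i j) t = 0
    rw [he, deriv_const]
  have key : ∀ k, k < n →
      (∑ l ∈ range (n + 1), dcM l * m t (l + k)) = -(momPair (m t) (P t n) (k + 1)) := by
    intro k hk
    ext i j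
    have hD : HasDerivAt (fun s => ∑ l ∈ range (n + 1), ∑ a, (P s n).coeff l i a * m s (l + k) a j)
        (∑ l ∈ range (n + 1), ∑ a : Fin p,
          (deriv (fun s => (P s n).coeff l i a) t * m t (l + k) a j
            + (P t n).coeff l i a * m t (l + k + 1) a j)) t := by
      refine HasDerivAt.fun_sum fun l _ => HasDerivAt.fun_sum fun a _ => ?_
      exact ((hdiff n l i a t).hasDerivAt).mul (hmom (l + k) t a j)
    have hzero : (fun s => ∑ l ∈ range (n + 1), ∑ a, (P s n).coeff l i a * m s (l + k) a j)
        = fun _ => (0 : ℝ) := by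
      funext s
      have h0 : momPair (m s) (P s n) k = 0 := horth s n k hk
      have : momPair (m s) (P s n) k i j
          = ∑ l ∈ range (n + 1), ∑ a, (P s n).coeff l i a * m s (l + k) a j := by
        simp [momPair, hdeg s n, Matrix.sum_apply, Matrix.mul_apply]
      rw [← this, h0, Matrix.zero_apply]
    have h0 : (∑ l ∈ range (n + 1), ∑ a : Fin p,
        (deriv (fun s => (P s n).coeff l i a) t * m t (l + k) a j
          + (P t n).coeff l i a * m t (l + k + 1) a j)) = 0 := by
      rw [hzero] at hD
      exact hD.unique (hasDerivAt_const t 0)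
    have hsplit : (∑ l ∈ range (n + 1), ∑ a : Fin p,
        (deriv (fun s => (P s n).coeff l i a) t * m t (l + k) a j
          + (P t n).coeff l i a * m t (l + k + 1) a j))
        = (∑ l ∈ range (n + 1), dcM l * m t (l + k)) i j
          + momPair (m t) (P t n) (k + 1) i j := by
      rw [momPair_eq_of_lt (m t) (P t n) (k + 1) (n + 1) (by rw [hdeg]; omega)]
      simp only [Finset.sum_add_distrib, Matrix.sum_apply, Matrix.mul_apply, hdcM,
        Matrix.of_apply, add_assoc]
    rw [hsplit] at h0
    rw [Matrix.neg_apply]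
    linarith
  set c : ℕ → Matrix (Fin p) (Fin p) ℝ := fun l => dcM l + b * (P t (n - 1)).coeff l with hcdef
  have hcz : ∀ k < n, ∑ l ∈ range n, c l * m t (l + k) = 0 := by
    intro k hk
    have e1 : ∑ l ∈ range n, c l * m t (l + k)
        = (∑ l ∈ range n, dcM l * m t (l + k)) + b * momPair (m t) (P t (n - 1)) k := by
      rw [momPair_eq_of_lt (m t) (P t (n - 1)) k n (by rw [hdeg]; omega), Finset.mul_sum,
        ← Finset.sum_add_distrib]
      refine Finset.sum_congr rfl fun l _ => ?_
      rw [hcdef, add_mul, mul_assoc]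
    have e2 : ∑ l ∈ range n, dcM l * m t (l + k) = ∑ l ∈ range (n + 1), dcM l * m t (l + k) := by
      rw [Finset.sum_range_succ, hdcMn, zero_mul, add_zero]
    rw [e1, e2, key k hk]
    rcases Nat.lt_or_ge (k + 1) n with h | h
    · rw [horth t n (k + 1) h, horth t (n - 1) k (by omega), neg_zero, mul_zero, add_zero]
    · have hkn : k = n - 1 := by omega
      subst hkn
      rw [show n - 1 + 1 = n by omega, hb, mul_assoc,
        Ring.inverse_mul_cancel _ (hH t (n - 1)), mul_one, neg_add_cancel]
  have hc0 := zero_of_pair (m t) (P t) (hmonic t) (horth t) (hH t) n c hcz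
  intro k i j
  rcases Nat.lt_or_ge k n with hk | hk
  · have h1 := hc0 k hk
    rw [hcdef] at h1
    have hd : dcM k = (-b) * (P t (n - 1)).coeff k := by
      rw [neg_mul]
      exact eq_neg_of_add_eq_zero_left h1
    exact congrFun (congrFun hd i) j
  · have hrhs : (P t (n - 1)).coeff k = 0 :=
      Polynomial.coeff_eq_zero_of_natDegree_lt (by rw [hdeg]; omega)
    have hlhs : (fun s => (P s n).coeff k i j) = fun _ => (P t n).coeff k i j := by
      funext s
      rcases eq_or_lt_of_le hk with h | h
      · rw [← h, hc1 s, hc1 t]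
      · rw [Polynomial.coeff_eq_zero_of_natDegree_lt (by rw [hdeg]; omega),
          Polynomial.coeff_eq_zero_of_natDegree_lt (show (P t n).natDegree < k by rw [hdeg]; omega)]
    rw [hlhs, deriv_const, hrhs, mul_zero, Matrix.zero_apply]
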